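/- arXiv:1606.05630 — 2 statements merged into one kernel-verified Lean document; each statement's English description precedes it below -/
import Mathlib

section
/- Let ν : ℕ → ℂ be a multiplicative function with |ν(n)| ≤ 1 for all n, satisfying the Daboussi–Delange condition with logarithmic speed with constants c > 0 and κ ∈ (0,1). Then there exists a constant C > 0 such that for every integer N ≥ 2, (1/N) · Σ_{m=1}^{N} | (1/N) Σ_{n=1}^{N} ν(n) ν(n+m) | ≤ C / (log N)^κ. -/
open Finset

noncomputable def ee (x : ℝ) : ℂ := Complex.exp (2 * Real.pi * Complex.I * x)

lemma ee_add (x y : ℝ) : ee (x + y) = ee x * ee y := by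
  rw [ee, ee, ee, ← Complex.exp_add]
  congr 1
  push_cast
  ring

lemma conj_ee (x : ℝ) : (starRingEnd ℂ) (ee x) = ee (-x) := by
  rw [ee, ee, ← Complex.exp_conj]
  congr 1
  simp only [map_mul, Complex.conj_I, Complex.conj_ofReal, map_ofNat]
  push_cast
  ring

lemma orth (Q : ℕ) (hQ : 0 < Q) (d : ℤ) :
    ∑ j ∈ Finset.range Q, ee (d * j / Q) = if (Q:ℤ) ∣ d then (Q:ℂ) else 0 := by
  have hQ' : (Q:ℂ) ≠ 0 := Nat.cast_ne_zero.mpr hQ.ne'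
  have hπ : (Real.pi : ℂ) ≠ 0 := Complex.ofReal_ne_zero.mpr Real.pi_ne_zero
  have h2πI : (2 * Real.pi * Complex.I : ℂ) ≠ 0 := by
    simp [Complex.I_ne_zero, hπ]
  have hterm : ∀ j : ℕ, ee (d * j / Q)
      = Complex.exp (2 * Real.pi * Complex.I * d / Q) ^ j := by
    intro j
    rw [← Complex.exp_nat_mul, ee]
    congr 1
    push_cast
    field_simp
  simp only [hterm]
  by_cases hdvd : (Q:ℤ) ∣ d
  · obtain ⟨k, hk⟩ := hdvd
    have hx : Complex.exp (2 * Real.pi * Complex.I * d / Q) = 1 := by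
      have h1 : (2 * Real.pi * Complex.I * d / Q : ℂ) = (k : ℂ) * (2 * Real.pi * Complex.I) := by
        have : (d : ℂ) = (Q : ℂ) * k := by exact_mod_cast congrArg (Int.cast : ℤ → ℂ) hk
        rw [this]
        field_simp
      rw [h1]
      exact Complex.exp_int_mul_two_pi_mul_I k
    have : ((Q:ℤ) ∣ d) := ⟨k, hk⟩
    simp [hx, this]
  · have hx : Complex.exp (2 * Real.pi * Complex.I * d / Q) ≠ 1 := by
      intro h
      obtain ⟨n, hn⟩ := Complex.exp_eq_one_iff.mp h
      have hd : (d : ℂ) = (n : ℂ) * Q := by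
        have h' : (2 * Real.pi * Complex.I : ℂ) * d = (2 * Real.pi * Complex.I : ℂ) * (n * Q) := by
          have := congrArg (fun z => z * (Q : ℂ)) hn
          field_simp at this
          linear_combination (2 * Real.pi * Complex.I) * this
        exact mul_left_cancel₀ h2πI h'
      have : d = n * Q := by exact_mod_cast hd
      exact hdvd ⟨n, by rw [this, mul_comm]⟩
    rw [geom_sum_eq hx]
    have hxQ : Complex.exp (2 * Real.pi * Complex.I * d / Q) ^ Q = 1 := by
      rw [← Complex.exp_nat_mul]
      have : (Q : ℂ) * (2 * Real.pi * Complex.I * d / Q) = (d : ℂ) * (2 * Real.pi * Complex.I) := by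
        field_simp
      rw [this]
      exact Complex.exp_int_mul_two_pi_mul_I d
    rw [hxQ]
    simp [if_neg hdvd]

lemma key (Q : ℕ) (hQ : 0 < Q) (A B : Finset ℕ) (f g : ℕ → ℂ)
    (hAB : ∀ n ∈ A, ∀ p ∈ B, (Q:ℤ) ∣ ((n:ℤ) - p) → n = p) :
    ∑ j ∈ Finset.range Q,
      (∑ n ∈ A, f n * ee (n * j / Q)) * (∑ p ∈ B, g p * ee (-(p * j / Q)))
    = Q * ∑ n ∈ A, (if n ∈ B then f n * g n else 0) := by
  have hterm : ∀ (n p j : ℕ),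
      (f n * ee (n * j / Q)) * (g p * ee (-(p * j / Q)))
      = f n * g p * ee ((((n:ℤ) - p : ℤ) : ℝ) * j / Q) := by
    intro n p j
    rw [show ((((n:ℤ) - p : ℤ) : ℝ) * j / Q) = (n * j / Q : ℝ) + (-(p * j / Q : ℝ)) by
      push_cast; ring, ee_add]
    ring
  simp only [sum_mul_sum, hterm]
  rw [Finset.sum_comm]
  have hinner : ∀ n ∈ A, (∑ j ∈ Finset.range Q, ∑ p ∈ B,
      f n * g p * ee ((((n:ℤ) - p : ℤ) : ℝ) * j / Q))
      = Q * (if n ∈ B then f n * g n else 0) := by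
    intro n hn
    rw [Finset.sum_comm]
    have hp : ∀ p ∈ B, (∑ j ∈ Finset.range Q,
        f n * g p * ee ((((n:ℤ) - p : ℤ) : ℝ) * j / Q))
        = if p = n then f n * g p * Q else 0 := by
      intro p hp
      rw [← Finset.mul_sum, orth Q hQ ((n:ℤ) - p)]
      by_cases h : p = n
      · subst h
        simp
      · have : ¬ ((Q:ℤ) ∣ ((n:ℤ) - p)) := fun hdvd => h (hAB n hn p hp hdvd).symm
        simp [this, h]
    rw [Finset.sum_congr rfl hp, Finset.sum_ite_eq' B n]
    by_cases h : n ∈ B <;> simp [h] <;> ring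
  rw [Finset.sum_congr rfl hinner, ← Finset.mul_sum]

lemma mul_conj_norm_sq (z : ℂ) : z * (starRingEnd ℂ) z = ((‖z‖^2 : ℝ) : ℂ) := by
  rw [Complex.mul_conj, Complex.normSq_eq_norm_sq]

lemma key_norm (Q : ℕ) (hQ : 0 < Q) (A : Finset ℕ) (f : ℕ → ℂ)
    (hA : ∀ n ∈ A, ∀ p ∈ A, (Q:ℤ) ∣ ((n:ℤ) - p) → n = p) :
    ∑ j ∈ Finset.range Q, ‖∑ n ∈ A, f n * ee (n * j / Q)‖^2
      = Q * ∑ n ∈ A, ‖f n‖^2 := by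
  have hconj : ∀ j : ℕ, (starRingEnd ℂ) (∑ n ∈ A, f n * ee (n * j / Q))
      = ∑ p ∈ A, (starRingEnd ℂ) (f p) * ee (-(p * j / Q)) := by
    intro j
    rw [map_sum]
    exact Finset.sum_congr rfl fun p _ => by rw [map_mul, conj_ee]
  have h := key Q hQ A A f (fun p => (starRingEnd ℂ) (f p)) hA
  have hmain : ((∑ j ∈ Finset.range Q, ‖∑ n ∈ A, f n * ee (n * j / Q)‖^2 : ℝ) : ℂ)
      = ((Q * ∑ n ∈ A, ‖f n‖^2 : ℝ) : ℂ) := by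
    rw [Complex.ofReal_sum]
    calc ∑ j ∈ Finset.range Q, ((‖∑ n ∈ A, f n * ee (n * j / Q)‖^2 : ℝ) : ℂ)
        = ∑ j ∈ Finset.range Q, (∑ n ∈ A, f n * ee (n * j / Q))
            * (starRingEnd ℂ) (∑ n ∈ A, f n * ee (n * j / Q)) :=
          Finset.sum_congr rfl fun j _ => (mul_conj_norm_sq _).symm
      _ = ∑ j ∈ Finset.range Q, (∑ n ∈ A, f n * ee (n * j / Q))
            * (∑ p ∈ A, (starRingEnd ℂ) (f p) * ee (-(p * j / Q))) :=
          Finset.sum_congr rfl fun j _ => by rw [hconj]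
      _ = Q * ∑ n ∈ A, (if n ∈ A then f n * (starRingEnd ℂ) (f n) else 0) := h
      _ = ((Q * ∑ n ∈ A, ‖f n‖^2 : ℝ) : ℂ) := by
          push_cast
          congr 1
          exact Finset.sum_congr rfl fun n hn => by
            rw [if_pos hn, mul_conj_norm_sq]; push_cast; ring
  exact_mod_cast hmain

theorem selfcorrelation_cesaro_bound_log_speed
    (ν : ℕ → ℂ) (hsize : ∀ n : ℕ, ‖ν n‖ ≤ 1)
    (hmult : ∀ m n : ℕ, Nat.Coprime m n → ν (m * n) = ν m * ν n)
    (c κ : ℝ) (hc : 0 < c) (hκ0 : 0 < κ) (hκ1 : κ < 1)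
    (hDD : ∀ (α : ℝ) (N : ℕ), 2 ≤ N →
      ‖(1 / (N : ℂ)) * ∑ n ∈ Finset.Icc 1 N,
          ν n * Complex.exp (2 * Real.pi * Complex.I * (n : ℂ) * (α : ℂ))‖ ≤
        c / (Real.log N) ^ κ) :
    ∃ C : ℝ, 0 < C ∧ ∀ N : ℕ, 2 ≤ N →
      (1 / (N : ℝ)) * ∑ m ∈ Finset.Icc 1 N,
          ‖(1 / (N : ℂ)) * ∑ n ∈ Finset.Icc 1 N, ν n * ν (n + m)‖ ≤
        C / (Real.log N) ^ κ := by
  refine ⟨2 * c, by linarith, fun N hN => ?_⟩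
  set Q := 2 * N with hQdef
  have hQ : 0 < Q := by omega
  have hN0 : (0:ℝ) < N := by positivity
  have hNne : (N:ℂ) ≠ 0 := by exact_mod_cast (show (N:ℝ) ≠ 0 from hN0.ne')
  set L : ℝ := Real.log N with hLdef
  have hL : 0 < L := Real.log_pos (by exact_mod_cast hN)
  have hLκ : 0 < L ^ κ := Real.rpow_pos_of_pos hL κ
  -- definitions
  set a : ℕ → ℂ := fun m => ∑ n ∈ Finset.Icc 1 N, ν n * ν (n + m) with ha
  set F : ℕ → ℂ := fun j => ∑ n ∈ Finset.Icc 1 N, ν n * ee (n * j / Q) with hF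
  set G : ℕ → ℂ := fun j => ∑ p ∈ Finset.Icc 1 Q, ν p * ee (-(p * j / Q)) with hG
  set P : ℕ → ℂ := fun j => ∑ m ∈ Finset.Icc 1 N, (starRingEnd ℂ) (a m) * ee (m * j / Q)
    with hP
  set B : ℝ := 2 * N * c / L ^ κ with hB
  have hB0 : 0 ≤ B := by positivity
  -- small-difference hypothesis on Icc 1 N
  have hsmallN : ∀ n ∈ Finset.Icc 1 N, ∀ p ∈ Finset.Icc 1 N,
      (Q:ℤ) ∣ ((n:ℤ) - p) → n = p := by
    intro n hn p hp hdvd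
    simp only [Finset.mem_Icc] at hn hp
    have := Int.eq_zero_of_abs_lt_dvd hdvd (by
      rw [abs_lt]; constructor <;> [push_cast; push_cast] <;> omega)
    omega
  -- Parseval for F
  have hSF : ∑ j ∈ Finset.range Q, ‖F j‖^2 ≤ (Q:ℝ) * N := by
    simp only [hF]
    rw [key_norm Q hQ _ ν hsmallN]
    have h1 : ∑ n ∈ Finset.Icc 1 N, ‖ν n‖^2 ≤ (N:ℝ) := by
      calc ∑ n ∈ Finset.Icc 1 N, ‖ν n‖^2 ≤ ∑ n ∈ Finset.Icc 1 N, 1 :=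
            Finset.sum_le_sum fun n _ => pow_le_one₀ (norm_nonneg _) (hsize n)
        _ = (N:ℝ) := by simp [Nat.card_Icc]
    have : (0:ℝ) ≤ Q := by positivity
    nlinarith
  -- Parseval for P
  set S : ℝ := ∑ m ∈ Finset.Icc 1 N, ‖a m‖^2 with hS
  have hS0 : 0 ≤ S := Finset.sum_nonneg fun m _ => sq_nonneg _
  have hSP : ∑ j ∈ Finset.range Q, ‖P j‖^2 = (Q:ℝ) * S := by
    simp only [hP]
    rw [key_norm Q hQ _ _ hsmallN, hS]
    congr 1
    exact Finset.sum_congr rfl fun m _ => by rw [RCLike.norm_conj]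
  -- Claim A
  have hclaimA : ∀ m ∈ Finset.Icc 1 N,
      ∑ j ∈ Finset.range Q, (F j * G j) * ee (m * j / Q) = (Q:ℂ) * a m := by
    intro m hm
    simp only [Finset.mem_Icc] at hm
    have hshift : ∀ j : ℕ, F j * ee (m * j / Q)
        = ∑ n ∈ Finset.Icc (1+m) (N+m), ν (n - m) * ee (n * j / Q) := by
      intro j
      rw [← Finset.map_add_right_Icc, Finset.sum_map, hF]
      simp only [Finset.sum_mul, addRightEmbedding_apply]
      refine Finset.sum_congr rfl fun n hn => ?_
      rw [Nat.add_sub_cancel]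
      rw [show ((n + m : ℕ) * j / Q : ℝ) = (n * j / Q : ℝ) + (m * j / Q : ℝ) by
        push_cast; ring, ee_add]
      ring
    have hAB : ∀ n ∈ Finset.Icc (1+m) (N+m), ∀ p ∈ Finset.Icc 1 Q,
        (Q:ℤ) ∣ ((n:ℤ) - p) → n = p := by
      intro n hn p hp hdvd
      simp only [Finset.mem_Icc] at hn hp
      have := Int.eq_zero_of_abs_lt_dvd hdvd (by
        rw [abs_lt]; constructor <;> [push_cast; push_cast] <;> omega)
      omega
    have hk := key Q hQ (Finset.Icc (1+m) (N+m)) (Finset.Icc 1 Q)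
      (fun n => ν (n - m)) ν hAB
    calc ∑ j ∈ Finset.range Q, (F j * G j) * ee (m * j / Q)
        = ∑ j ∈ Finset.range Q,
            (∑ n ∈ Finset.Icc (1+m) (N+m), ν (n - m) * ee (n * j / Q)) * G j := by
          refine Finset.sum_congr rfl fun j _ => ?_
          rw [← hshift]
          ring
      _ = (Q:ℂ) * ∑ n ∈ Finset.Icc (1+m) (N+m),
            (if n ∈ Finset.Icc 1 Q then ν (n - m) * ν n else 0) := hk
      _ = (Q:ℂ) * a m := by
          congr 1
          rw [ha]
          rw [show Finset.Icc (1+m) (N+m)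
              = Finset.map (addRightEmbedding m) (Finset.Icc 1 N) by
            rw [Finset.map_add_right_Icc], Finset.sum_map]
          refine Finset.sum_congr rfl fun n hn => ?_
          simp only [Finset.mem_Icc] at hn
          simp only [addRightEmbedding_apply]
          rw [if_pos (by simp only [Finset.mem_Icc]; omega), Nat.add_sub_cancel]
  -- bound on G
  have hGbd : ∀ j : ℕ, ‖G j‖ ≤ B := by
    intro j
    have hQ2 : 2 ≤ Q := by omega
    have hdd := hDD (-(j / Q : ℝ)) Q hQ2
    have hmatch : ∀ n ∈ Finset.Icc 1 Q,
        ν n * Complex.exp (2 * Real.pi * Complex.I * (n:ℂ) * ((-(j / Q : ℝ) : ℝ):ℂ))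
        = ν n * ee (-(n * j / Q)) := by
      intro n _
      congr 1
      rw [ee]
      congr 1
      push_cast
      ring
    rw [Finset.sum_congr rfl hmatch] at hdd
    have hlog : L ^ κ ≤ (Real.log Q) ^ κ := by
      apply Real.rpow_le_rpow hL.le _ hκ0.le
      apply Real.log_le_log hN0
      push_cast [hQdef]
      linarith
    have hdd2 : ‖(1 / (Q:ℂ)) * G j‖ ≤ c / L ^ κ := by
      refine hdd.trans ?_
      apply div_le_div_of_nonneg_left hc.le hLκ hlog
    have hGrw : G j = (Q:ℂ) * ((1 / (Q:ℂ)) * G j) := by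
      have : (Q:ℂ) ≠ 0 := by
        exact_mod_cast (show ((Q:ℝ)) ≠ 0 by positivity)
      field_simp
    calc ‖G j‖ = ‖(Q:ℂ)‖ * ‖(1 / (Q:ℂ)) * G j‖ := by rw [← norm_mul, ← hGrw]
      _ ≤ (Q:ℝ) * (c / L ^ κ) := by
          rw [Complex.norm_natCast]
          exact mul_le_mul_of_nonneg_left hdd2 (by positivity)
      _ = B := by rw [hB]; push_cast [hQdef]; ring
  -- QS identity
  have hcomp : ∑ j ∈ Finset.range Q, P j * (F j * G j) = (((Q:ℝ) * S : ℝ) : ℂ) := by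
    calc ∑ j ∈ Finset.range Q, P j * (F j * G j)
        = ∑ j ∈ Finset.range Q, ∑ m ∈ Finset.Icc 1 N,
            (starRingEnd ℂ) (a m) * ((F j * G j) * ee (m * j / Q)) := by
          refine Finset.sum_congr rfl fun j _ => ?_
          rw [hP, Finset.sum_mul]
          exact Finset.sum_congr rfl fun m _ => by ring
      _ = ∑ m ∈ Finset.Icc 1 N, (starRingEnd ℂ) (a m)
            * ∑ j ∈ Finset.range Q, (F j * G j) * ee (m * j / Q) := by
          rw [Finset.sum_comm]
          exact Finset.sum_congr rfl fun m _ => by rw [Finset.mul_sum]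
      _ = ∑ m ∈ Finset.Icc 1 N, (starRingEnd ℂ) (a m) * ((Q:ℂ) * a m) :=
          Finset.sum_congr rfl fun m hm => by rw [hclaimA m hm]
      _ = (((Q:ℝ) * S : ℝ) : ℂ) := by
          have hterm : ∀ m : ℕ, (starRingEnd ℂ) (a m) * ((Q:ℂ) * a m)
              = (Q:ℂ) * ((‖a m‖^2 : ℝ) : ℂ) := fun m => by
            rw [← mul_conj_norm_sq]; ring
          rw [Finset.sum_congr rfl fun m _ => hterm m, ← Finset.mul_sum, hS]
          push_cast
          ring
  have hQS : ((Q:ℝ) * S : ℝ) = ‖∑ j ∈ Finset.range Q, P j * (F j * G j)‖ := by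
    rw [hcomp, Complex.norm_real]
    exact (Real.norm_of_nonneg (by positivity)).symm
  -- conclude S ≤ B^2 * N
  have hSbound : S ≤ B^2 * N := by
    set X : ℝ := ∑ j ∈ Finset.range Q, ‖P j‖ * ‖F j‖ with hX
    have hX0 : 0 ≤ X := Finset.sum_nonneg fun j _ => by positivity
    have h1 : (Q:ℝ) * S ≤ B * X := by
      rw [hQS]
      calc ‖∑ j ∈ Finset.range Q, P j * (F j * G j)‖
          ≤ ∑ j ∈ Finset.range Q, ‖P j * (F j * G j)‖ := norm_sum_le _ _
        _ ≤ ∑ j ∈ Finset.range Q, B * (‖P j‖ * ‖F j‖) := by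
            refine Finset.sum_le_sum fun j _ => ?_
            rw [norm_mul, norm_mul]
            calc ‖P j‖ * (‖F j‖ * ‖G j‖) ≤ ‖P j‖ * (‖F j‖ * B) := by
                  have := hGbd j
                  gcongr
              _ = B * (‖P j‖ * ‖F j‖) := by ring
        _ = B * X := by rw [hX, Finset.mul_sum]
    have h2 : X^2 ≤ ((Q:ℝ) * S) * ((Q:ℝ) * N) := by
      calc X^2 ≤ (∑ j ∈ Finset.range Q, ‖P j‖^2) * (∑ j ∈ Finset.range Q, ‖F j‖^2) :=
            Finset.sum_mul_sq_le_sq_mul_sq _ _ _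
        _ ≤ ((Q:ℝ) * S) * ((Q:ℝ) * N) := by
            rw [hSP]
            exact mul_le_mul_of_nonneg_left hSF (mul_nonneg (Nat.cast_nonneg Q) hS0)
    have hQ0 : (0:ℝ) < Q := by positivity
    rcases eq_or_lt_of_le hS0 with hS0' | hS0'
    · rw [← hS0']; exact mul_nonneg (mul_nonneg hB0 hB0) (Nat.cast_nonneg N) |>.trans_eq (by ring)
    · have h3 : ((Q:ℝ) * S) * ((Q:ℝ) * S) ≤ (B * X) * (B * X) :=
        mul_le_mul h1 h1 (mul_nonneg (Nat.cast_nonneg Q) hS0) (mul_nonneg hB0 hX0)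
      have h2' : B^2 * (X^2) ≤ B^2 * (((Q:ℝ) * S) * ((Q:ℝ) * N)) :=
        mul_le_mul_of_nonneg_left h2 (sq_nonneg B)
      have hT : 0 < (Q:ℝ) * S := mul_pos hQ0 hS0'
      have h4 : (Q:ℝ) * S ≤ B^2 * ((Q:ℝ) * N) := by nlinarith [h3, h2', hT]
      have h5 : (Q:ℝ) * S ≤ (Q:ℝ) * (B^2 * N) := by linarith [h4]
      exact le_of_mul_le_mul_left h5 hQ0
  -- conclude sum of norms
  have hsum : ∑ m ∈ Finset.Icc 1 N, ‖a m‖ ≤ N * B := by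
    have h1 : (∑ m ∈ Finset.Icc 1 N, ‖a m‖)^2 ≤ (N:ℝ) * S := by
      calc (∑ m ∈ Finset.Icc 1 N, ‖a m‖)^2
          = (∑ m ∈ Finset.Icc 1 N, 1 * ‖a m‖)^2 := by simp
        _ ≤ (∑ m ∈ Finset.Icc 1 N, (1:ℝ)^2) * (∑ m ∈ Finset.Icc 1 N, ‖a m‖^2) :=
            Finset.sum_mul_sq_le_sq_mul_sq _ _ _
        _ = (N:ℝ) * S := by rw [hS]; simp [Nat.card_Icc]
    have h2 : (∑ m ∈ Finset.Icc 1 N, ‖a m‖)^2 ≤ ((N:ℝ) * B)^2 := by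
      calc (∑ m ∈ Finset.Icc 1 N, ‖a m‖)^2 ≤ (N:ℝ) * S := h1
        _ ≤ (N:ℝ) * (B^2 * N) := mul_le_mul_of_nonneg_left hSbound (by positivity)
        _ = ((N:ℝ) * B)^2 := by ring
    exact (pow_le_pow_iff_left₀ (Finset.sum_nonneg fun m _ => norm_nonneg _)
      (by positivity) (by norm_num)).mp h2
  have hgoal : ∀ m : ℕ, (∑ n ∈ Finset.Icc 1 N, ν n * ν (n + m)) = a m := fun m => rfl
  simp only [hgoal]
  have hrw : ∀ m ∈ Finset.Icc 1 N, ‖(1/(N:ℂ)) * a m‖ = (1/(N:ℝ)) * ‖a m‖ := by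
    intro m _
    rw [norm_mul]
    congr 1
    simp [Complex.norm_natCast]
  rw [Finset.sum_congr rfl hrw, ← Finset.mul_sum]
  calc (1/(N:ℝ)) * ((1/(N:ℝ)) * ∑ m ∈ Finset.Icc 1 N, ‖a m‖)
      ≤ (1/(N:ℝ)) * ((1/(N:ℝ)) * ((N:ℝ) * B)) := by gcongr
    _ = 2 * c / L ^ κ := by
        rw [hB]
        field_simp
end

section
/- For Lebesgue-almost every real number t, the averages (1/N) · Σ_{n=1}^{N} Λ(n) e^{2πint} converge to 0 as N → ∞. -/
open Filter Finset MeasureTheory Complex Real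

lemma exp_orth (a : ℝ) (j : ℤ) (hj : j ≠ 0) :
    ∫ t in a..(a+1), Complex.exp (2 * Real.pi * Complex.I * j * t) = 0 := by
  have hc : (2 * Real.pi * Complex.I * j : ℂ) ≠ 0 := by
    simp [Real.pi_ne_zero, Complex.I_ne_zero, hj]
  rw [integral_exp_mul_complex hc]
  rw [div_eq_zero_iff]
  left
  rw [sub_eq_zero]
  push_cast
  rw [mul_add, Complex.exp_add, mul_one]
  rw [show (2 * (Real.pi:ℂ) * Complex.I * j) = j * (2 * Real.pi * Complex.I) by ring,
    Complex.exp_int_mul_two_pi_mul_I, mul_one]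

noncomputable def SS (N : ℕ) (t : ℝ) : ℂ :=
  ∑ n ∈ Finset.Icc 1 N, (ArithmeticFunction.vonMangoldt n : ℂ) *
    Complex.exp (2 * Real.pi * Complex.I * (n : ℂ) * (t : ℂ))

lemma orth2 (a : ℝ) (n m : ℕ) :
    ∫ t in a..(a+1), Complex.exp (2 * Real.pi * Complex.I * n * t) *
      (starRingEnd ℂ) (Complex.exp (2 * Real.pi * Complex.I * m * t)) =
      if n = m then 1 else 0 := by
  have key : ∀ t : ℝ, Complex.exp (2 * Real.pi * Complex.I * n * t) *
      (starRingEnd ℂ) (Complex.exp (2 * Real.pi * Complex.I * m * t)) =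
      Complex.exp (2 * Real.pi * Complex.I * (((n : ℤ) - (m : ℤ) : ℤ) : ℂ) * t) := by
    intro t
    rw [← Complex.exp_conj, ← Complex.exp_add]
    congr 1
    simp only [map_mul, Complex.conj_I, Complex.conj_ofReal, Complex.conj_natCast, map_ofNat]
    push_cast
    ring
  simp only [key]
  by_cases h : n = m
  · subst h
    simp only [sub_self, if_pos rfl]
    simp [intervalIntegral.integral_const]
  · rw [if_neg h]
    have hj : ((n : ℤ) - m) ≠ 0 := sub_ne_zero.2 (by exact_mod_cast h)
    exact exp_orth a _ hj

lemma term_cont (n : ℕ) : Continuous fun t : ℝ => Complex.exp (2 * Real.pi * Complex.I * n * t) := by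
  fun_prop

lemma SS_continuous (N : ℕ) : Continuous (SS N) := by
  unfold SS
  exact continuous_finset_sum _ fun n _ => (continuous_const.mul (term_cont n))

lemma l2_id (a : ℝ) (N : ℕ) :
    ∫ t in a..(a+1), Complex.normSq (SS N t) = ∑ n ∈ Finset.Icc 1 N,
      (ArithmeticFunction.vonMangoldt n : ℝ)^2 := by
  have key : (∫ t in a..(a+1), (SS N t * (starRingEnd ℂ) (SS N t))) =
      ((∑ n ∈ Finset.Icc 1 N, (ArithmeticFunction.vonMangoldt n : ℝ)^2 : ℝ) : ℂ) := by
    have expand : ∀ t : ℝ, SS N t * (starRingEnd ℂ) (SS N t) =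
        ∑ n ∈ Finset.Icc 1 N, ∑ m ∈ Finset.Icc 1 N,
          ((ArithmeticFunction.vonMangoldt n : ℂ) * (ArithmeticFunction.vonMangoldt m : ℂ)) *
            (Complex.exp (2 * Real.pi * Complex.I * n * t) *
              (starRingEnd ℂ) (Complex.exp (2 * Real.pi * Complex.I * m * t))) := by
      intro t
      unfold SS
      rw [map_sum, Finset.sum_mul_sum]
      refine Finset.sum_congr rfl fun n _ => Finset.sum_congr rfl fun m _ => ?_
      simp only [map_mul, Complex.conj_ofReal]
      ring
    simp only [expand]
    rw [intervalIntegral.integral_finset_sum]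
    · have inner : ∀ n ∈ Finset.Icc 1 N, (∫ t in a..(a+1),
          ∑ m ∈ Finset.Icc 1 N,
          ((ArithmeticFunction.vonMangoldt n : ℂ) * (ArithmeticFunction.vonMangoldt m : ℂ)) *
            (Complex.exp (2 * Real.pi * Complex.I * n * t) *
              (starRingEnd ℂ) (Complex.exp (2 * Real.pi * Complex.I * m * t)))) =
          (ArithmeticFunction.vonMangoldt n : ℂ)^2 := by
        intro n hn
        rw [intervalIntegral.integral_finset_sum]
        · have : ∀ m ∈ Finset.Icc 1 N, (∫ t in a..(a+1),
              ((ArithmeticFunction.vonMangoldt n : ℂ) * (ArithmeticFunction.vonMangoldt m : ℂ)) *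
                (Complex.exp (2 * Real.pi * Complex.I * n * t) *
                  (starRingEnd ℂ) (Complex.exp (2 * Real.pi * Complex.I * m * t)))) =
              if n = m then (ArithmeticFunction.vonMangoldt n : ℂ) *
                (ArithmeticFunction.vonMangoldt m : ℂ) else 0 := by
            intro m _
            rw [intervalIntegral.integral_const_mul, orth2]
            split <;> simp
          rw [Finset.sum_congr rfl this]
          rw [Finset.sum_ite_eq]
          simp [hn, sq]
        · intro m _
          exact (continuous_const.mul ((term_cont n).mul (continuous_star.comp (term_cont m)))).intervalIntegrable _ _
      rw [Finset.sum_congr rfl inner]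
      push_cast
      rfl
    · intro n _
      apply Continuous.intervalIntegrable
      exact continuous_finset_sum _ fun m _ =>
        continuous_const.mul ((term_cont n).mul (continuous_star.comp (term_cont m)))
  have lhs : (∫ t in a..(a+1), (SS N t * (starRingEnd ℂ) (SS N t))) =
      ((∫ t in a..(a+1), Complex.normSq (SS N t) : ℝ) : ℂ) := by
    rw [← intervalIntegral.integral_ofReal]
    refine intervalIntegral.integral_congr fun t _ => ?_
    exact (Complex.mul_conj _)
  rw [lhs] at key
  exact_mod_cast key

lemma sum_sq_le (N : ℕ) : ∑ n ∈ Finset.Icc 1 N, (ArithmeticFunction.vonMangoldt n : ℝ)^2 ≤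
    N * (Real.log N)^2 := by
  calc ∑ n ∈ Finset.Icc 1 N, (ArithmeticFunction.vonMangoldt n : ℝ)^2
      ≤ ∑ n ∈ Finset.Icc 1 N, (Real.log N)^2 := by
        refine Finset.sum_le_sum fun n hn => ?_
        rw [Finset.mem_Icc] at hn
        have h1 : (0:ℝ) ≤ ArithmeticFunction.vonMangoldt n := ArithmeticFunction.vonMangoldt_nonneg
        have h2 : (ArithmeticFunction.vonMangoldt n : ℝ) ≤ Real.log N :=
          le_trans ArithmeticFunction.vonMangoldt_le_log
            (Real.log_le_log (by exact_mod_cast hn.1) (by exact_mod_cast hn.2))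
        exact pow_le_pow_left₀ h1 h2 2
    _ ≤ N * (Real.log N)^2 := by
        rw [Finset.sum_const, Nat.card_Icc]
        simp only [nsmul_eq_mul]
        norm_num

noncomputable def AA (N : ℕ) (t : ℝ) : ℂ := (1/(N:ℂ)) * SS N t

lemma AA_continuous (N : ℕ) : Continuous (AA N) := continuous_const.mul (SS_continuous N)

lemma lint_bound (a : ℝ) (N : ℕ) (hN : 1 ≤ N) :
    ∫⁻ t in Set.Ioc a (a+1), ENNReal.ofReal (Complex.normSq (AA N t)) ≤
      ENNReal.ofReal ((Real.log N)^2 / N) := by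
  have hNR : (0:ℝ) < N := by exact_mod_cast hN
  have hint : IntegrableOn (fun t => Complex.normSq (AA N t)) (Set.Ioc a (a+1)) volume :=
    (Complex.continuous_normSq.comp (AA_continuous N)).integrableOn_Ioc
  rw [← ofReal_integral_eq_lintegral_ofReal hint
    (Filter.Eventually.of_forall fun t => Complex.normSq_nonneg _)]
  apply ENNReal.ofReal_le_ofReal
  have heq : ∀ t : ℝ, Complex.normSq (AA N t) = (1/(N:ℝ)^2) * Complex.normSq (SS N t) := by
    intro t
    unfold AA
    rw [Complex.normSq_mul]
    congr 1
    rw [show (1/(N:ℂ)) = (((1/(N:ℝ)) : ℝ) : ℂ) by push_cast; ring]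
    rw [Complex.normSq_ofReal]
    ring
  calc ∫ t in Set.Ioc a (a+1), Complex.normSq (AA N t)
      = (1/(N:ℝ)^2) * ∫ t in Set.Ioc a (a+1), Complex.normSq (SS N t) := by
        simp only [heq]; rw [MeasureTheory.integral_const_mul]
    _ = (1/(N:ℝ)^2) * ∑ n ∈ Finset.Icc 1 N, (ArithmeticFunction.vonMangoldt n : ℝ)^2 := by
        rw [← intervalIntegral.integral_of_le (by linarith : a ≤ a + 1), l2_id]
    _ ≤ (1/(N:ℝ)^2) * (N * (Real.log N)^2) := by
        have := sum_sq_le N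
        have h0 : (0:ℝ) ≤ 1/(N:ℝ)^2 := by positivity
        nlinarith [sum_sq_le N]
    _ = (Real.log N)^2 / N := by field_simp

lemma term_meas (N : ℕ) : Measurable fun t : ℝ => ENNReal.ofReal (Complex.normSq (AA N t)) :=
  ENNReal.measurable_ofReal.comp (Complex.continuous_normSq.comp (AA_continuous N)).measurable

lemma bound_k4 (k : ℕ) (hk : 1 ≤ k) :
    (Real.log ((k^4 : ℕ) : ℝ))^2 / ((k^4 : ℕ) : ℝ) ≤ 16 / (k:ℝ)^2 := by
  have hkR : (1:ℝ) ≤ k := by exact_mod_cast hk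
  push_cast
  have hlog : Real.log ((k:ℝ)^4) = 4 * Real.log k := by
    rw [Real.log_pow]; push_cast; ring
  have hlogk : 0 ≤ Real.log k := Real.log_nonneg hkR
  have hlogle : Real.log k ≤ k := by
    calc Real.log k ≤ (k:ℝ) - 1 := Real.log_le_sub_one_of_pos (by linarith)
    _ ≤ k := by linarith
  have h1 : (Real.log ((k:ℝ)^4))^2 ≤ 16 * (k:ℝ)^2 := by
    rw [hlog]
    nlinarith
  rw [div_le_div_iff₀ (by positivity) (by positivity)]
  nlinarith [sq_nonneg ((k:ℝ))]

lemma tsum_fin (a : ℝ) :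
    ∫⁻ t in Set.Ioc a (a+1), (∑' k : ℕ, ENNReal.ofReal (Complex.normSq (AA (k^4) t))) ≠ ⊤ := by
  rw [lintegral_tsum fun k => (term_meas (k^4)).aemeasurable]
  have hle : ∀ k : ℕ, (∫⁻ t in Set.Ioc a (a+1), ENNReal.ofReal (Complex.normSq (AA (k^4) t))) ≤
      ENNReal.ofReal (16 / (k:ℝ)^2) := by
    intro k
    rcases Nat.eq_zero_or_pos k with rfl | hk
    · have h0 : ∀ t : ℝ, AA 0 t = 0 := by
        intro t; unfold AA SS; norm_num
      norm_num [h0]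
    · exact le_trans (lint_bound a (k^4) (Nat.one_le_iff_ne_zero.2 (by positivity)))
        (ENNReal.ofReal_le_ofReal (bound_k4 k hk))
  refine ne_top_of_le_ne_top ?_ (ENNReal.tsum_le_tsum hle)
  rw [← ENNReal.ofReal_tsum_of_nonneg (fun k => by positivity)]
  · exact ENNReal.ofReal_ne_top
  · have : Summable (fun k : ℕ => 16 * (1 / (k:ℝ)^2)) :=
      (summable_one_div_nat_pow.mpr one_lt_two).mul_left 16
    refine this.congr fun k => by ring

lemma ae_Ioc (a : ℝ) : ∀ᵐ t ∂(volume.restrict (Set.Ioc a (a+1))),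
    Tendsto (fun k : ℕ => AA (k^4) t) atTop (nhds 0) := by
  have hmeas : Measurable fun t : ℝ => ∑' k : ℕ, ENNReal.ofReal (Complex.normSq (AA (k^4) t)) :=
    Measurable.ennreal_tsum fun k => term_meas (k^4)
  filter_upwards [ae_lt_top hmeas (tsum_fin a)] with t ht
  have h1 : Tendsto (fun k : ℕ => ENNReal.ofReal (Complex.normSq (AA (k^4) t))) atTop (nhds 0) :=
    ENNReal.tendsto_atTop_zero_of_tsum_ne_top ht.ne
  have h2 : Tendsto (fun k : ℕ => Complex.normSq (AA (k^4) t)) atTop (nhds 0) := by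
    have h0 := (ENNReal.tendsto_toReal (by simp : (0:ENNReal) ≠ ⊤)).comp h1
    simp only [ENNReal.toReal_zero] at h0
    exact h0.congr fun k => ENNReal.toReal_ofReal (Complex.normSq_nonneg _)
  rw [tendsto_zero_iff_norm_tendsto_zero]
  have h3 : Tendsto (fun k : ℕ => Real.sqrt (Complex.normSq (AA (k^4) t))) atTop (nhds 0) := by
    have := (Real.continuous_sqrt.tendsto 0).comp h2
    simpa [Function.comp_def] using this
  refine h3.congr fun k => ?_
  rw [← Complex.norm_def]

lemma norm_exp_one (n : ℕ) (t : ℝ) : ‖Complex.exp (2 * Real.pi * Complex.I * n * t)‖ = 1 := by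
  rw [Complex.norm_exp]
  have : (2 * (Real.pi:ℂ) * Complex.I * n * t).re = 0 := by
    simp
  rw [this, Real.exp_zero]

lemma SS_diff_bound (t : ℝ) (M N : ℕ) (h : M ≤ N) :
    ‖SS N t - SS M t‖ ≤ ((N - M : ℕ) : ℝ) * Real.log N := by
  have key : SS N t - SS M t = ∑ n ∈ Finset.Ioc M N,
      (ArithmeticFunction.vonMangoldt n : ℂ) *
        Complex.exp (2 * Real.pi * Complex.I * (n : ℂ) * (t : ℂ)) := by
    unfold SS
    rw [show Finset.Icc 1 N = Finset.Ioc 0 N from Finset.Icc_add_one_left_eq_Ioc 0 N,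
      show Finset.Icc 1 M = Finset.Ioc 0 M from Finset.Icc_add_one_left_eq_Ioc 0 M]
    rw [sub_eq_iff_eq_add']
    exact (Finset.sum_Ioc_consecutive _ (Nat.zero_le M) h).symm
  rw [key]
  calc ‖∑ n ∈ Finset.Ioc M N, (ArithmeticFunction.vonMangoldt n : ℂ) *
        Complex.exp (2 * Real.pi * Complex.I * (n : ℂ) * (t : ℂ))‖
      ≤ ∑ n ∈ Finset.Ioc M N, ‖(ArithmeticFunction.vonMangoldt n : ℂ) *
        Complex.exp (2 * Real.pi * Complex.I * (n : ℂ) * (t : ℂ))‖ := norm_sum_le _ _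
    _ ≤ ∑ n ∈ Finset.Ioc M N, Real.log N := by
        refine Finset.sum_le_sum fun n hn => ?_
        rw [Finset.mem_Ioc] at hn
        rw [norm_mul, norm_exp_one, mul_one, Complex.norm_real, Real.norm_eq_abs,
          _root_.abs_of_nonneg ArithmeticFunction.vonMangoldt_nonneg]
        have hn1 : (0:ℝ) < n := by
          have : 1 ≤ n := by omega
          exact_mod_cast Nat.lt_of_lt_of_le Nat.zero_lt_one this
        exact le_trans ArithmeticFunction.vonMangoldt_le_log
          (Real.log_le_log hn1 (by exact_mod_cast hn.2))
    _ = ((N - M : ℕ) : ℝ) * Real.log N := by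
        rw [Finset.sum_const, Nat.card_Ioc, nsmul_eq_mul]

lemma log_term_tendsto :
    Tendsto (fun k : ℕ => 60 * Real.log ((k:ℝ) + 1) / k) atTop (nhds 0) := by
  have h1 := Real.tendsto_pow_log_div_mul_add_atTop 1 (-1) 1 one_ne_zero
  have h2 : Tendsto (fun k : ℕ => ((k:ℝ) + 1)) atTop atTop :=
    tendsto_atTop_add_const_right _ 1 tendsto_natCast_atTop_atTop
  have h3 := h1.comp h2
  have h4 : Tendsto (fun k : ℕ => Real.log ((k:ℝ) + 1) / k) atTop (nhds 0) := by
    refine h3.congr fun k => ?_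
    simp only [Function.comp_apply, pow_one]
    congr 1
    ring
  have h5 := h4.const_mul (60:ℝ)
  simpa [mul_div_assoc] using h5

lemma sqrt_sqrt_tendsto : Tendsto (fun N : ℕ => Nat.sqrt (Nat.sqrt N)) atTop atTop := by
  refine tendsto_atTop_atTop.2 fun b => ⟨b^4, fun N hN => ?_⟩
  have h1 : Nat.sqrt (b^4) = b^2 := by
    rw [show b^4 = (b^2)^2 by ring, Nat.sqrt_eq']
  calc b = Nat.sqrt (Nat.sqrt (b^4)) := by rw [h1, Nat.sqrt_eq']
  _ ≤ Nat.sqrt (Nat.sqrt N) := Nat.sqrt_le_sqrt (Nat.sqrt_le_sqrt hN)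

lemma norm_AA (M : ℕ) (t : ℝ) : ‖AA M t‖ = ‖SS M t‖ / M := by
  unfold AA
  rw [norm_mul, norm_div, norm_one, Complex.norm_natCast, one_div, div_eq_inv_mul]

lemma fill (t : ℝ) (h : Tendsto (fun k : ℕ => AA (k^4) t) atTop (nhds 0)) :
    Tendsto (fun N : ℕ => AA N t) atTop (nhds 0) := by
  rw [tendsto_zero_iff_norm_tendsto_zero]
  have hB : Tendsto (fun N : ℕ => ‖AA ((Nat.sqrt (Nat.sqrt N))^4) t‖ +
      60 * Real.log ((Nat.sqrt (Nat.sqrt N) : ℝ) + 1) / (Nat.sqrt (Nat.sqrt N) : ℝ))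
      atTop (nhds 0) := by
    have h1 : Tendsto (fun k : ℕ => ‖AA (k^4) t‖) atTop (nhds 0) :=
      tendsto_zero_iff_norm_tendsto_zero.1 h
    have := (h1.add log_term_tendsto).comp sqrt_sqrt_tendsto
    simpa [Function.comp_def] using this
  refine squeeze_zero' (Eventually.of_forall fun N => norm_nonneg _) ?_ hB
  filter_upwards [eventually_ge_atTop 1] with N hN
  set k := Nat.sqrt (Nat.sqrt N) with hkdef
  have hk0 : 0 < k := Nat.sqrt_pos.2 (Nat.sqrt_pos.2 hN)
  have hk4 : k^4 ≤ N := by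
    have a1 : k^2 ≤ Nat.sqrt N := Nat.sqrt_le' _
    calc k^4 = (k^2)^2 := by ring
    _ ≤ (Nat.sqrt N)^2 := Nat.pow_le_pow_left a1 2
    _ ≤ N := Nat.sqrt_le' N
  have hN4 : N < (k+1)^4 := by
    have a1 : N < (Nat.sqrt N + 1)^2 := Nat.lt_succ_sqrt' N
    have a2 : Nat.sqrt N < (k+1)^2 := Nat.lt_succ_sqrt' _
    calc N < (Nat.sqrt N + 1)^2 := a1
    _ ≤ ((k+1)^2)^2 := Nat.pow_le_pow_left (by omega) 2
    _ = (k+1)^4 := by ring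
  have hk1R : (1:ℝ) ≤ k := by exact_mod_cast hk0
  have hNR : (1:ℝ) ≤ N := by exact_mod_cast hN
  have hk4R : ((k:ℝ))^4 ≤ N := by exact_mod_cast hk4
  have hN4R : (N:ℝ) < ((k:ℝ)+1)^4 := by exact_mod_cast hN4
  have hlogN : 0 ≤ Real.log N := Real.log_nonneg hNR
  have hlogk : 0 ≤ Real.log ((k:ℝ)+1) := Real.log_nonneg (by linarith)
  have step1 : ‖SS N t‖ ≤ ‖SS (k^4) t‖ + ((N - k^4 : ℕ):ℝ) * Real.log N := by
    calc ‖SS N t‖ = ‖SS (k^4) t + (SS N t - SS (k^4) t)‖ := by ring_nf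
    _ ≤ ‖SS (k^4) t‖ + ‖SS N t - SS (k^4) t‖ := norm_add_le _ _
    _ ≤ ‖SS (k^4) t‖ + ((N - k^4 : ℕ):ℝ) * Real.log N := by
        have := SS_diff_bound t (k^4) N hk4
        linarith
  have c1 : ((N - k^4 : ℕ):ℝ) = (N:ℝ) - (k:ℝ)^4 := by
    rw [Nat.cast_sub hk4]; push_cast; ring
  have c2 : (N:ℝ) - (k:ℝ)^4 ≤ 15*(k:ℝ)^3 := by
    have hN4R' : (N:ℝ) + 1 ≤ ((k:ℝ)+1)^4 := by exact_mod_cast hN4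
    have e : ((k:ℝ)+1)^4 = (k:ℝ)^4+4*(k:ℝ)^3+6*(k:ℝ)^2+4*(k:ℝ)+1 := by ring
    have q1 : (k:ℝ)^2 ≤ (k:ℝ)^3 := by nlinarith
    have q2 : (k:ℝ) ≤ (k:ℝ)^3 := by nlinarith
    linarith
  have c3 : Real.log N ≤ 4 * Real.log ((k:ℝ)+1) := by
    calc Real.log N ≤ Real.log (((k:ℝ)+1)^4) :=
      Real.log_le_log (by linarith) (le_of_lt hN4R)
    _ = 4 * Real.log ((k:ℝ)+1) := by
        rw [Real.log_pow]; push_cast; ring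
  rw [norm_AA]
  calc ‖SS N t‖ / N ≤ (‖SS (k^4) t‖ + ((N - k^4 : ℕ):ℝ) * Real.log N) / N := by
        apply div_le_div_of_nonneg_right step1 (by linarith)
    _ = ‖SS (k^4) t‖ / N + ((N - k^4 : ℕ):ℝ) * Real.log N / N := by ring
    _ ≤ ‖AA (k^4) t‖ + 60 * Real.log ((k:ℝ)+1) / k := by
        have hknz : ((k^4:ℕ):ℝ) = (k:ℝ)^4 := by push_cast; ring
        have t1 : ‖SS (k^4) t‖ / N ≤ ‖AA (k^4) t‖ := by
          rw [norm_AA, hknz]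
          apply div_le_div_of_nonneg_left (norm_nonneg _) (by positivity) hk4R
        have t2 : ((N - k^4 : ℕ):ℝ) * Real.log N / N ≤ 60 * Real.log ((k:ℝ)+1) / k := by
          rw [c1, div_le_div_iff₀ (by linarith) (by linarith)]
          have p1 : ((N:ℝ) - (k:ℝ)^4) * Real.log N ≤ (15*(k:ℝ)^3) * (4 * Real.log ((k:ℝ)+1)) :=
            mul_le_mul c2 c3 hlogN (by positivity)
          have p2 : (k:ℝ)^4 * Real.log ((k:ℝ)+1) ≤ (N:ℝ) * Real.log ((k:ℝ)+1) :=
            mul_le_mul_of_nonneg_right hk4R hlogk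
          nlinarith
        linarith

theorem vonMangoldt_weighted_exponential_averages_ae_zero :
    ∀ᵐ (t : ℝ) ∂(volume : Measure ℝ), Tendsto (fun N : ℕ =>
      (1 / (N : ℂ)) * ∑ n ∈ Finset.Icc 1 N,
        (ArithmeticFunction.vonMangoldt n : ℂ) *
          Complex.exp (2 * Real.pi * Complex.I * (n : ℂ) * (t : ℂ)))
      atTop (nhds 0) := by
  have main : ∀ᵐ t : ℝ ∂(volume : Measure ℝ),
      Tendsto (fun k : ℕ => AA (k^4) t) atTop (nhds 0) := by
    rw [MeasureTheory.ae_iff]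
    have cover : {t : ℝ | ¬ Tendsto (fun k : ℕ => AA (k^4) t) atTop (nhds 0)} ⊆
        ⋃ m : ℤ, ({t : ℝ | ¬ Tendsto (fun k : ℕ => AA (k^4) t) atTop (nhds 0)} ∩
          Set.Ioc ((m:ℝ)) ((m:ℝ)+1)) := by
      intro t ht
      refine Set.mem_iUnion.2 ⟨⌈t⌉ - 1, ht, ?_, ?_⟩
      · push_cast
        have := Int.ceil_lt_add_one t
        linarith
      · push_cast
        have := Int.le_ceil t
        linarith
    refine measure_mono_null cover (measure_iUnion_null fun m => ?_)
    have h := ae_Ioc (m:ℝ)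
    rw [MeasureTheory.ae_iff, Measure.restrict_apply' measurableSet_Ioc] at h
    exact h
  filter_upwards [main] with t ht
  exact fill t ht
end
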